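/- Let P(λ) = λ(J₁+R₁) + (J₂+R₂) be an n×n complex posH pencil. If P(λ) is singular, i.e., det(λ₀(J₁+R₁) + (J₂+R₂)) = 0 for every λ₀ ∈ ℂ, then there exists a nonzero x ∈ ℂⁿ with J₁x = 0, R₁x = 0 and R₂x = 0, and there exists a nonzero y ∈ ℂⁿ with J₂y = 0, R₁y = 0 and R₂y = 0. In particular, each of the triples (J₁, R₁, R₂) and (J₂, R₁, R₂) has a common kernel. -/

import Mathlib

open Matrix
open scoped ComplexOrder

private lemma skew_quad {n : ℕ} (J : Matrix (Fin n) (Fin n) ℂ) (hJ : Jᴴ = -J)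
    (v : Fin n → ℂ) : star (star v ⬝ᵥ (J *ᵥ v)) = -(star v ⬝ᵥ (J *ᵥ v)) := by
  rw [← star_dotProduct, star_mulVec, hJ]
  rw [show (star v ᵥ* (-J)) ⬝ᵥ v = star v ⬝ᵥ ((-J) *ᵥ v) from
    (Matrix.dotProduct_mulVec _ _ _).symm]
  rw [Matrix.neg_mulVec, dotProduct_neg]

private lemma herm_quad {n : ℕ} (R : Matrix (Fin n) (Fin n) ℂ) (hR : Rᴴ = R)
    (v : Fin n → ℂ) : star (star v ⬝ᵥ (R *ᵥ v)) = star v ⬝ᵥ (R *ᵥ v) := by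
  rw [← star_dotProduct, star_mulVec, hR]
  rw [show (star v ᵥ* R) ⬝ᵥ v = star v ⬝ᵥ (R *ᵥ v) from
    (Matrix.dotProduct_mulVec _ _ _).symm]

private lemma posH_aux {n : ℕ}
    (J₁ J₂ R₁ R₂ : Matrix (Fin n) (Fin n) ℂ)
    (hJ₁ : J₁ᴴ = -J₁) (hJ₂ : J₂ᴴ = -J₂)
    (hR₁ : R₁.PosSemidef) (hR₂ : R₂.PosSemidef)
    (hsing : ∀ μ : ℂ, (μ • (J₁ + R₁) + (J₂ + R₂)).det = 0)
    (t : ℝ) (ht : 0 < t) :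
    ∃ x : Fin n → ℂ, ‖x‖ = 1 ∧ R₁ *ᵥ x = 0 ∧ R₂ *ᵥ x = 0 ∧
      (t : ℂ) • (J₁ *ᵥ x) + J₂ *ᵥ x = 0 := by
  obtain ⟨v, hv0, hveq⟩ := (Matrix.exists_mulVec_eq_zero_iff).2 (hsing (t : ℂ))
  have hexp : (t : ℂ) • (J₁ *ᵥ v) + (t : ℂ) • (R₁ *ᵥ v) + (J₂ *ᵥ v + R₂ *ᵥ v) = 0 := by
    have := hveq
    rw [Matrix.add_mulVec, Matrix.smul_mulVec, Matrix.add_mulVec,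
      Matrix.add_mulVec, smul_add] at this
    exact this
  set a₁ := star v ⬝ᵥ (J₁ *ᵥ v) with ha₁def
  set a₂ := star v ⬝ᵥ (J₂ *ᵥ v) with ha₂def
  set b₁ := star v ⬝ᵥ (R₁ *ᵥ v) with hb₁def
  set b₂ := star v ⬝ᵥ (R₂ *ᵥ v) with hb₂def
  have hquad : (t : ℂ) * a₁ + (t : ℂ) * b₁ + (a₂ + b₂) = 0 := by
    have := congrArg (fun w => star v ⬝ᵥ w) hexp
    simpa [dotProduct_add, dotProduct_smul, smul_eq_mul] using this
  have hquadstar : (t : ℂ) * (-a₁) + (t : ℂ) * b₁ + (-a₂ + b₂) = 0 := by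
    have := congrArg star hquad
    simpa [star_add, star_mul', Complex.conj_ofReal, (show (starRingEnd ℂ) a₁ = -a₁ from skew_quad J₁ hJ₁ v),
      (show (starRingEnd ℂ) a₂ = -a₂ from skew_quad J₂ hJ₂ v), (show (starRingEnd ℂ) b₁ = b₁ from herm_quad R₁ hR₁.1 v), (show (starRingEnd ℂ) b₂ = b₂ from herm_quad R₂ hR₂.1 v),
      ← ha₁def, ← ha₂def, ← hb₁def, ← hb₂def] using this
  have hsum : (t : ℂ) * b₁ + b₂ = 0 := by
    have h2 : ((t : ℂ) * a₁ + (t : ℂ) * b₁ + (a₂ + b₂)) +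
        ((t : ℂ) * (-a₁) + (t : ℂ) * b₁ + (-a₂ + b₂)) = 0 := by
      rw [hquad, hquadstar]; ring
    have h3 : (2 : ℂ) * ((t : ℂ) * b₁ + b₂) = 0 := by linear_combination h2
    have := mul_eq_zero.1 h3
    simpa using this
  have hb₁nn : 0 ≤ b₁ := hR₁.dotProduct_mulVec_nonneg v
  have hb₂nn : 0 ≤ b₂ := hR₂.dotProduct_mulVec_nonneg v
  have htnn : (0 : ℂ) ≤ (t : ℂ) := by
    rw [Complex.zero_le_real]; exact ht.le
  have hzero : (t : ℂ) * b₁ = 0 ∧ b₂ = 0 :=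
    (add_eq_zero_iff_of_nonneg (mul_nonneg htnn hb₁nn) hb₂nn).1 hsum
  have hb₁ : b₁ = 0 := by
    rcases mul_eq_zero.1 hzero.1 with h | h
    · exact absurd h (by exact_mod_cast ht.ne')
    · exact h
  have hR₁v : R₁ *ᵥ v = 0 := (hR₁.dotProduct_mulVec_zero_iff v).1 hb₁
  have hR₂v : R₂ *ᵥ v = 0 := (hR₂.dotProduct_mulVec_zero_iff v).1 hzero.2
  have hJv : (t : ℂ) • (J₁ *ᵥ v) + J₂ *ᵥ v = 0 := by
    have := hexp
    rw [hR₁v, hR₂v] at this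
    simpa using this
  -- normalize
  have hnv : ‖v‖ ≠ 0 := norm_ne_zero_iff.2 hv0
  refine ⟨(‖v‖ : ℂ)⁻¹ • v, ?_, ?_, ?_, ?_⟩
  · rw [norm_smul]
    simp [norm_inv, hnv]
  · rw [Matrix.mulVec_smul, hR₁v, smul_zero]
  · rw [Matrix.mulVec_smul, hR₂v, smul_zero]
  · rw [Matrix.mulVec_smul, Matrix.mulVec_smul, smul_comm ((t:ℂ)) _, ← smul_add, hJv,
      smul_zero]

private lemma lim_aux {n : ℕ} (A B C D : Matrix (Fin n) (Fin n) ℂ)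
    (x : ℕ → Fin n → ℂ) (c : ℕ → ℂ)
    (hx : ∀ k, ‖x k‖ = 1) (hC : ∀ k, C *ᵥ x k = 0) (hD : ∀ k, D *ᵥ x k = 0)
    (hA : ∀ k, A *ᵥ x k = c k • (B *ᵥ x k))
    (hc : Filter.Tendsto c Filter.atTop (nhds 0)) :
    ∃ z : Fin n → ℂ, z ≠ 0 ∧ A *ᵥ z = 0 ∧ C *ᵥ z = 0 ∧ D *ᵥ z = 0 := by
  have hsph : ∀ k, x k ∈ Metric.sphere (0 : Fin n → ℂ) 1 := by
    intro k
    simp [mem_sphere_zero_iff_norm, hx k]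
  obtain ⟨z, hz, φ, hφ, hlim⟩ := (isCompact_sphere (0 : Fin n → ℂ) 1).tendsto_subseq hsph
  have hzn : ‖z‖ = 1 := by simpa [mem_sphere_zero_iff_norm] using hz
  have cont : ∀ M : Matrix (Fin n) (Fin n) ℂ, Continuous (fun w : Fin n → ℂ => M *ᵥ w) :=
    fun M => (Matrix.mulVecLin M).continuous_of_finiteDimensional
  have hlimM : ∀ M : Matrix (Fin n) (Fin n) ℂ,
      Filter.Tendsto (fun k => M *ᵥ x (φ k)) Filter.atTop (nhds (M *ᵥ z)) :=
    fun M => ((cont M).tendsto z).comp hlim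
  refine ⟨z, ?_, ?_, ?_, ?_⟩
  · intro h
    rw [h, norm_zero] at hzn
    exact zero_ne_one hzn
  · have h1 : Filter.Tendsto (fun k => A *ᵥ x (φ k)) Filter.atTop (nhds 0) := by
      have h2 : Filter.Tendsto (fun k => c (φ k) • (B *ᵥ x (φ k))) Filter.atTop
          (nhds ((0 : ℂ) • (B *ᵥ z))) :=
        Filter.Tendsto.smul (hc.comp hφ.tendsto_atTop) (hlimM B)
      rw [zero_smul] at h2
      exact h2.congr fun k => (hA (φ k)).symm
    exact tendsto_nhds_unique (hlimM A) h1
  · refine tendsto_nhds_unique (hlimM C) ?_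
    simp only [hC]
    exact (tendsto_const_nhds : Filter.Tendsto (fun _ : ℕ => (0 : Fin n → ℂ))
      Filter.atTop (nhds 0))
  · refine tendsto_nhds_unique (hlimM D) ?_
    simp only [hD]
    exact (tendsto_const_nhds : Filter.Tendsto (fun _ : ℕ => (0 : Fin n → ℂ))
      Filter.atTop (nhds 0))

/-- Corollary 3.8(i): if a posH pencil `P(λ) = λ(J₁+R₁) + (J₂+R₂)` is singular,
then each of the triples `(J₁, R₁, R₂)` and `(J₂, R₁, R₂)` has a common kernel. -/
theorem posH_singular_common_kernel {n : ℕ}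
    (J₁ J₂ R₁ R₂ : Matrix (Fin n) (Fin n) ℂ)
    (hJ₁ : J₁ᴴ = -J₁) (hJ₂ : J₂ᴴ = -J₂)
    (hR₁ : R₁.PosSemidef) (hR₂ : R₂.PosSemidef)
    (hsing : ∀ μ : ℂ, (μ • (J₁ + R₁) + (J₂ + R₂)).det = 0) :
    (∃ x : Fin n → ℂ, x ≠ 0 ∧ J₁ *ᵥ x = 0 ∧ R₁ *ᵥ x = 0 ∧ R₂ *ᵥ x = 0) ∧
    (∃ y : Fin n → ℂ, y ≠ 0 ∧ J₂ *ᵥ y = 0 ∧ R₁ *ᵥ y = 0 ∧ R₂ *ᵥ y = 0) := by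
  have hctend : Filter.Tendsto (fun k : ℕ => ((((k : ℝ) + 1)⁻¹ : ℝ) : ℂ))
      Filter.atTop (nhds 0) := by
    have h1 : Filter.Tendsto (fun k : ℕ => ((k : ℝ) + 1)⁻¹) Filter.atTop (nhds 0) := by
      simpa [one_div] using tendsto_one_div_add_atTop_nhds_zero_nat (𝕜 := ℝ)
    have := (Complex.continuous_ofReal.tendsto 0).comp h1
    simpa [Function.comp_def] using this
  constructor
  · -- take t = k + 1 → ∞
    have hex : ∀ k : ℕ, ∃ x : Fin n → ℂ, ‖x‖ = 1 ∧ R₁ *ᵥ x = 0 ∧ R₂ *ᵥ x = 0 ∧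
        (((k : ℝ) + 1 : ℝ) : ℂ) • (J₁ *ᵥ x) + J₂ *ᵥ x = 0 :=
      fun k => posH_aux J₁ J₂ R₁ R₂ hJ₁ hJ₂ hR₁ hR₂ hsing ((k : ℝ) + 1)
        (by positivity)
    choose x hx hxR₁ hxR₂ hxJ using hex
    have hAc : ∀ k : ℕ, J₁ *ᵥ x k = (-((((k : ℝ) + 1)⁻¹ : ℝ) : ℂ)) • (J₂ *ᵥ x k) := by
      intro k
      have hk0 : ((((k : ℝ) + 1) : ℝ) : ℂ) ≠ 0 := by
        simp only [ne_eq, Complex.ofReal_eq_zero]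
        positivity
      have := hxJ k
      have h2 : (((k : ℝ) + 1 : ℝ) : ℂ) • (J₁ *ᵥ x k) = -(J₂ *ᵥ x k) := by
        rw [eq_neg_iff_add_eq_zero]; exact this
      have h3 := congrArg (fun w => ((((k : ℝ) + 1 : ℝ) : ℂ))⁻¹ • w) h2
      simp only [smul_smul, inv_mul_cancel₀ hk0, one_smul, smul_neg] at h3
      rw [h3, ← neg_smul, Complex.ofReal_inv]
    exact lim_aux J₁ J₂ R₁ R₂ x _ hx hxR₁ hxR₂ hAc (by simpa using hctend.neg)
  · -- take t = 1/(k+1) → 0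
    have hex : ∀ k : ℕ, ∃ y : Fin n → ℂ, ‖y‖ = 1 ∧ R₁ *ᵥ y = 0 ∧ R₂ *ᵥ y = 0 ∧
        (((((k : ℝ) + 1)⁻¹ : ℝ)) : ℂ) • (J₁ *ᵥ y) + J₂ *ᵥ y = 0 :=
      fun k => posH_aux J₁ J₂ R₁ R₂ hJ₁ hJ₂ hR₁ hR₂ hsing (((k : ℝ) + 1)⁻¹)
        (by positivity)
    choose y hy hyR₁ hyR₂ hyJ using hex
    have hAc : ∀ k : ℕ, J₂ *ᵥ y k = (-((((k : ℝ) + 1)⁻¹ : ℝ) : ℂ)) • (J₁ *ᵥ y k) := by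
      intro k
      have := hyJ k
      rw [add_comm, ← eq_neg_iff_add_eq_zero] at this
      rw [this, neg_smul]
    exact lim_aux J₂ J₁ R₁ R₂ y _ hy hyR₁ hyR₂ hAc (by simpa using hctend.neg)
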